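/- arXiv:1610.04930 — 3 statements merged into one kernel-verified Lean document; each statement's English description precedes it below -/
import Mathlib

section
/- Let p₀: ℝ² → ℝ satisfy p₀(R₆₀ x) = p₀(x) for all x ∈ ℝ², and suppose that for each x ∈ ℝ² the families (exp(i K·v) p₀(x − v)) indexed by v ∈ Λ_A, respectively by v ∈ Λ_B, are absolutely summable (for instance p₀ continuous with compact support). Define P_A(x) = Σ_{v ∈ Λ_A} exp(i K·v) p₀(x − v) and P_B(x) = Σ_{v ∈ Λ_B} exp(i K·v) p₀(x − v). Then ℛ[P_A] = τ P_A and ℛ[P_B] = conj(τ) P_B; moreover P_I(x + u) = exp(i K·u) P_I(x) for I ∈ {A, B}, all u ∈ Λ_h and all x ∈ ℝ². -/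
noncomputable section

open scoped Real

/-- The plane `ℝ²` with the Euclidean norm. -/
abbrev V2 : Type := EuclideanSpace ℝ (Fin 2)

/-- The vector `(a, b) ∈ ℝ²`. -/
def vec (a b : ℝ) : V2 := WithLp.toLp 2 ![a, b]

/-- The dot product on `ℝ²`. -/
def dot (a b : V2) : ℝ := a 0 * b 0 + a 1 * b 1

/-- `v₁ = (√3/2, 1/2)`. -/
def v1 : V2 := vec (Real.sqrt 3 / 2) (1 / 2)

/-- `v₂ = (√3/2, −1/2)`. -/
def v2 : V2 := vec (Real.sqrt 3 / 2) (-(1 / 2))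

/-- The lattice point `m₁ v₁ + m₂ v₂` of `Λ_h`. -/
def lat (m : ℤ × ℤ) : V2 := (m.1 : ℝ) • v1 + (m.2 : ℝ) • v2

/-- `k₁ = 2π(1/√3, 1)`. -/
def dk1 : V2 := vec (2 * π / Real.sqrt 3) (2 * π)

/-- `k₂ = 2π(1/√3, −1)`. -/
def dk2 : V2 := vec (2 * π / Real.sqrt 3) (-(2 * π))

/-- The dual lattice point `m₁ k₁ + m₂ k₂` of `Λ_h*`. -/
def dlat (m : ℤ × ℤ) : V2 := (m.1 : ℝ) • dk1 + (m.2 : ℝ) • dk2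

/-- `K = (0, 4π/3)`. -/
def KK : V2 := vec 0 (4 * π / 3)

/-- Clockwise rotation by `2π/3` about the origin (the matrix `R`). -/
def rotR (x : V2) : V2 :=
  vec (-(1/2) * x 0 + (Real.sqrt 3 / 2) * x 1) (-(Real.sqrt 3 / 2) * x 0 - (1/2) * x 1)

/-- The transpose `Rᵀ`. -/
def rotRT (x : V2) : V2 :=
  vec (-(1/2) * x 0 - (Real.sqrt 3 / 2) * x 1) ((Real.sqrt 3 / 2) * x 0 - (1/2) * x 1)

/-- Clockwise rotation by `π/3` about the origin (the matrix `R₆₀`). -/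
def rot60 (x : V2) : V2 :=
  vec ((1/2) * x 0 + (Real.sqrt 3 / 2) * x 1) (-(Real.sqrt 3 / 2) * x 0 + (1/2) * x 1)

/-- `e_{A,1} = (1/√3, 0)`. -/
def eA1 : V2 := vec (1 / Real.sqrt 3) 0

/-- `e_{A,ν} = R^{ν−1} e_{A,1}` for `ν = 1, 2, 3` (indexed by `Fin 3`). -/
def eA (ν : Fin 3) : V2 := rotR^[(ν : ℕ)] eA1

/-- `e_{B,ν} = −e_{A,ν}`. -/
def eB (ν : Fin 3) : V2 := -eA ν

/-- `e_{I,ν}` for `I ∈ {A, B}` (`true ↦ A`, `false ↦ B`). -/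
def eVec (I : Bool) (ν : Fin 3) : V2 := if I then eA ν else eB ν

/-- `γ(k) = Σ_{ν=1}^3 exp(i k·e_{B,ν})`. -/
def gam (k : V2) : ℂ := ∑ ν : Fin 3, Complex.exp (Complex.I * (dot k (eB ν)))

/-- `W_TB(k) = |γ(k)|`. -/
def Wtb (k : V2) : ℝ := ‖gam k‖

/-- `v_B = (1/√3, 0)`. -/
def vB : V2 := vec (1 / Real.sqrt 3) 0

/-- The hexagon center `x_c = (1/(2√3), −1/2)`. -/
def xc : V2 := vec (1 / (2 * Real.sqrt 3)) (-(1 / 2))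

/-- The rotation operator `ℛ[f](x) = f(x_c + Rᵀ(x − x_c))`. -/
def Rop (f : V2 → ℂ) (x : V2) : ℂ := f (xc + rotRT (x - xc))

/-- `τ = exp(2πi/3)`. -/
def tau : ℂ := Complex.exp (2 * (π : ℂ) * Complex.I / 3)

/-- The Euclidean norm of an integer pair. -/
def znorm (m : ℤ × ℤ) : ℝ := Real.sqrt ((m.1 : ℝ) ^ 2 + (m.2 : ℝ) ^ 2)

/-- `N_bad(w) = {m ∈ ℤ² : |w + m₁v₁ + m₂v₂| = 1/√3}`. -/
def Nbad (w : V2) : Set (ℤ × ℤ) := {m | ‖w + lat m‖ = 1 / Real.sqrt 3}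

/-- The `i`-th standard basis vector of `ℝ²`. -/
def basis2 (i : Fin 2) : V2 := EuclideanSpace.single i 1

/-- Partial derivative `∂_i f` of a complex-valued function on `ℝ²`. -/
def pd (i : Fin 2) (f : V2 → ℂ) : V2 → ℂ := fun x => fderiv ℝ f x (basis2 i)

/-- The Laplacian `Δf = ∂₁²f + ∂₂²f` of a complex-valued function on `ℝ²`. -/
def lap (f : V2 → ℂ) (x : V2) : ℂ :=
  ∑ i : Fin 2, fderiv ℝ (fun y => fderiv ℝ f y (basis2 i)) x (basis2 i)

/-- The radial profile of the fundamental solution of `−Δ + 1` on `ℝ²`: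
`𝒦(r) = (2π)⁻¹ e^{−r} ∫₀^∞ e^{−ζ} ζ^{−1/2} (2r + ζ)^{−1/2} dζ`. -/
def Kker (r : ℝ) : ℝ :=
  (2 * π)⁻¹ * Real.exp (-r) *
    ∫ ζ in Set.Ioi (0 : ℝ), Real.exp (-ζ) * ζ ^ (-(1/2 : ℝ)) * (2 * r + ζ) ^ (-(1/2 : ℝ))

/-- The approximate Floquet–Bloch mode `P_A(x) = Σ_{v ∈ Λ_A} exp(i K·v) p₀(x − v)`. -/
def modePA (p₀ : V2 → ℝ) (x : V2) : ℂ :=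
  ∑' m : ℤ × ℤ, Complex.exp (Complex.I * (dot KK (lat m))) * (p₀ (x - lat m) : ℂ)

/-- The approximate Floquet–Bloch mode `P_B(x) = Σ_{v ∈ Λ_B} exp(i K·v) p₀(x − v)`. -/
def modePB (p₀ : V2 → ℝ) (x : V2) : ℂ :=
  ∑' m : ℤ × ℤ, Complex.exp (Complex.I * (dot KK (vB + lat m))) * (p₀ (x - (vB + lat m)) : ℂ)

section Aux

private lemma s3 : Real.sqrt 3 * Real.sqrt 3 = 3 := Real.mul_self_sqrt (by norm_num)

private lemma s3sq : Real.sqrt 3 ^ 2 = 3 := by rw [sq]; exact s3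

private lemma s3cube : Real.sqrt 3 ^ 3 = 3 * Real.sqrt 3 := by rw [pow_succ, s3sq]

private lemma rot60_rot60 (y : V2) : rot60 (rot60 y) = rotR y := by
  ext i
  fin_cases i <;>
  · simp only [rot60, rotR, vec, PiLp.toLp_apply, Matrix.cons_val_zero, Matrix.cons_val_one, Matrix.head_cons,
      Fin.isValue]
    ring_nf
    simp only [s3sq, s3cube, Matrix.cons_val_zero, Matrix.cons_val_one, Matrix.head_cons]
    ring

private lemma cval (m : ℤ × ℤ) : dot KK (lat m) = 2 * π / 3 * ((m.1 : ℝ) - (m.2 : ℝ)) := by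
  simp only [dot, KK, lat, v1, v2, vec, PiLp.toLp_apply, PiLp.add_apply, PiLp.smul_apply, smul_eq_mul,
    Matrix.cons_val_zero, Matrix.cons_val_one, Matrix.head_cons]
  ring

private lemma dotKK_add (a b : V2) : dot KK (a + b) = dot KK a + dot KK b := by
  simp only [dot, PiLp.add_apply]
  ring

private lemma lat_add' (m u : ℤ × ℤ) : lat (m + u) = lat m + lat u := by
  simp only [lat, Prod.fst_add, Prod.snd_add, Int.cast_add]
  module

private lemma dotKK_vB : dot KK vB = 0 := by
  simp [dot, KK, vB, vec]

private lemma keyA (x : V2) (m : ℤ × ℤ) :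
    rotR (xc + rotRT (x - xc) - lat m) = x - lat (-m.1 - m.2, m.1 + 1) := by
  ext i
  have h6 : (1:ℝ) / (2 * Real.sqrt 3) = Real.sqrt 3 / 6 := by
    rw [div_eq_div_iff (by positivity) (by norm_num)]
    linarith [s3]
  fin_cases i <;>
  · simp only [rotR, rotRT, xc, lat, v1, v2, vec, PiLp.toLp_apply, PiLp.add_apply, PiLp.sub_apply,
      PiLp.smul_apply, smul_eq_mul, Matrix.cons_val_zero, Matrix.cons_val_one,
      Matrix.head_cons, Fin.isValue, h6]
    push_cast
    ring_nf
    simp only [s3sq, s3cube, Matrix.cons_val_zero, Matrix.cons_val_one, Matrix.head_cons]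
    ring

private lemma keyB (x : V2) (m : ℤ × ℤ) :
    rotR (xc + rotRT (x - xc) - (vB + lat m)) = x - (vB + lat (-m.1 - m.2 - 1, m.1 + 1)) := by
  ext i
  have h6 : (1:ℝ) / (2 * Real.sqrt 3) = Real.sqrt 3 / 6 := by
    rw [div_eq_div_iff (by positivity) (by norm_num)]
    linarith [s3]
  have h3 : (1:ℝ) / Real.sqrt 3 = Real.sqrt 3 / 3 := by
    rw [div_eq_div_iff (by positivity) (by norm_num)]
    linarith [s3]
  fin_cases i <;>
  · simp only [rotR, rotRT, xc, vB, lat, v1, v2, vec, PiLp.toLp_apply, PiLp.add_apply, PiLp.sub_apply,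
      PiLp.smul_apply, smul_eq_mul, Matrix.cons_val_zero, Matrix.cons_val_one,
      Matrix.head_cons, Fin.isValue, h6, h3]
    push_cast
    ring_nf
    simp only [s3sq, s3cube, Matrix.cons_val_zero, Matrix.cons_val_one, Matrix.head_cons]
    ring

end Aux
private def eqvA : ℤ × ℤ ≃ ℤ × ℤ where
  toFun m := (-m.1 - m.2, m.1 + 1)
  invFun m := (m.2 - 1, -m.1 - m.2 + 1)
  left_inv m := by cases m; simp only [Prod.mk.injEq]; omega
  right_inv m := by cases m; simp only [Prod.mk.injEq]; omega

private def eqvB : ℤ × ℤ ≃ ℤ × ℤ where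
  toFun m := (-m.1 - m.2 - 1, m.1 + 1)
  invFun m := (m.2 - 1, -m.1 - m.2)
  left_inv m := by cases m; simp only [Prod.mk.injEq]; omega
  right_inv m := by cases m; simp only [Prod.mk.injEq]; omega

private lemma conj_tau : (starRingEnd ℂ) tau = Complex.exp (-(2 * (π : ℂ) * Complex.I / 3)) := by
  rw [tau, ← Complex.exp_conj]
  congr 1
  simp [map_div₀, Complex.conj_I, map_ofNat]
  ring

private lemma phaseA (m : ℤ × ℤ) :
    Complex.exp (Complex.I * (dot KK (lat m))) =
      tau * Complex.exp (Complex.I * (dot KK (lat (-m.1 - m.2, m.1 + 1)))) := by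
  have h1 : Complex.I * ((dot KK (lat m) : ℝ) : ℂ)
      = (2 * (π : ℂ) * Complex.I / 3
          + Complex.I * ((dot KK (lat (-m.1 - m.2, m.1 + 1)) : ℝ) : ℂ))
        + (m.1 : ℂ) * (2 * (π : ℂ) * Complex.I) := by
    rw [cval, cval]
    push_cast
    ring
  rw [h1, Complex.exp_add, Complex.exp_add, Complex.exp_int_mul_two_pi_mul_I, mul_one, tau]

private lemma phaseB (m : ℤ × ℤ) :
    Complex.exp (Complex.I * (dot KK (vB + lat m))) =
      (starRingEnd ℂ) tau
        * Complex.exp (Complex.I * (dot KK (vB + lat (-m.1 - m.2 - 1, m.1 + 1)))) := by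
  have hv : ∀ u : ℤ × ℤ, dot KK (vB + lat u) = dot KK (lat u) := fun u => by
    rw [dotKK_add, dotKK_vB, zero_add]
  have h1 : Complex.I * ((dot KK (vB + lat m) : ℝ) : ℂ)
      = (-(2 * (π : ℂ) * Complex.I / 3)
          + Complex.I * ((dot KK (vB + lat (-m.1 - m.2 - 1, m.1 + 1)) : ℝ) : ℂ))
        + ((m.1 + 1 : ℤ) : ℂ) * (2 * (π : ℂ) * Complex.I) := by
    rw [hv, hv, cval, cval]
    push_cast
    ring
  rw [h1, Complex.exp_add, Complex.exp_add, Complex.exp_int_mul_two_pi_mul_I, mul_one, conj_tau]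

/-- If `p₀` is `R₆₀`-invariant and the defining families are absolutely
summable, then `ℛ[P_A] = τ P_A`, `ℛ[P_B] = conj(τ) P_B`, and `P_A, P_B` are
`K`-pseudo-periodic. -/
theorem statement8 (p₀ : V2 → ℝ) (hsym : ∀ x : V2, p₀ (rot60 x) = p₀ x)
    (hsumA : ∀ x : V2, Summable (fun m : ℤ × ℤ =>
      ‖Complex.exp (Complex.I * (dot KK (lat m))) * (p₀ (x - lat m) : ℂ)‖))
    (hsumB : ∀ x : V2, Summable (fun m : ℤ × ℤ =>
      ‖Complex.exp (Complex.I * (dot KK (vB + lat m))) * (p₀ (x - (vB + lat m)) : ℂ)‖)) :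
    (∀ x : V2, Rop (modePA p₀) x = tau * modePA p₀ x) ∧
    (∀ x : V2, Rop (modePB p₀) x = (starRingEnd ℂ) tau * modePB p₀ x) ∧
    (∀ x : V2, ∀ u : ℤ × ℤ,
      modePA p₀ (x + lat u) = Complex.exp (Complex.I * (dot KK (lat u))) * modePA p₀ x) ∧
    (∀ x : V2, ∀ u : ℤ × ℤ,
      modePB p₀ (x + lat u) = Complex.exp (Complex.I * (dot KK (lat u))) * modePB p₀ x) := by
  have p0R : ∀ w : V2, p₀ (rotR w) = p₀ w := fun w => by
    rw [← rot60_rot60, hsym, hsym]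
  refine ⟨?_, ?_, ?_, ?_⟩
  · -- ℛ[P_A] = τ P_A
    intro x
    have h2 : ∀ m : ℤ × ℤ,
        Complex.exp (Complex.I * (dot KK (lat m))) *
            (p₀ (xc + rotRT (x - xc) - lat m) : ℂ)
          = tau * (Complex.exp (Complex.I * (dot KK (lat (eqvA m)))) *
              (p₀ (x - lat (eqvA m)) : ℂ)) := by
      intro m
      show _ = tau * (Complex.exp (Complex.I * (dot KK (lat (-m.1 - m.2, m.1 + 1)))) *
          (p₀ (x - lat (-m.1 - m.2, m.1 + 1)) : ℂ))
      rw [← p0R (xc + rotRT (x - xc) - lat m), keyA, phaseA m]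
      ring
    calc Rop (modePA p₀) x
        = ∑' m : ℤ × ℤ, Complex.exp (Complex.I * (dot KK (lat m))) *
            (p₀ (xc + rotRT (x - xc) - lat m) : ℂ) := rfl
      _ = ∑' m : ℤ × ℤ, tau * (Complex.exp (Complex.I * (dot KK (lat (eqvA m)))) *
            (p₀ (x - lat (eqvA m)) : ℂ)) := tsum_congr h2
      _ = tau * ∑' m : ℤ × ℤ, Complex.exp (Complex.I * (dot KK (lat (eqvA m)))) *
            (p₀ (x - lat (eqvA m)) : ℂ) := tsum_mul_left
      _ = tau * modePA p₀ x := by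
          rw [Equiv.tsum_eq eqvA (fun m : ℤ × ℤ => Complex.exp (Complex.I * (dot KK (lat m))) *
            (p₀ (x - lat m) : ℂ))]
          rfl
  · -- ℛ[P_B] = conj(τ) P_B
    intro x
    have h2 : ∀ m : ℤ × ℤ,
        Complex.exp (Complex.I * (dot KK (vB + lat m))) *
            (p₀ (xc + rotRT (x - xc) - (vB + lat m)) : ℂ)
          = (starRingEnd ℂ) tau *
              (Complex.exp (Complex.I * (dot KK (vB + lat (eqvB m)))) *
                (p₀ (x - (vB + lat (eqvB m))) : ℂ)) := by
      intro m
      show _ = (starRingEnd ℂ) tau *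
          (Complex.exp (Complex.I * (dot KK (vB + lat (-m.1 - m.2 - 1, m.1 + 1)))) *
            (p₀ (x - (vB + lat (-m.1 - m.2 - 1, m.1 + 1))) : ℂ))
      rw [← p0R (xc + rotRT (x - xc) - (vB + lat m)), keyB, phaseB m]
      ring
    calc Rop (modePB p₀) x
        = ∑' m : ℤ × ℤ, Complex.exp (Complex.I * (dot KK (vB + lat m))) *
            (p₀ (xc + rotRT (x - xc) - (vB + lat m)) : ℂ) := rfl
      _ = ∑' m : ℤ × ℤ, (starRingEnd ℂ) tau *
            (Complex.exp (Complex.I * (dot KK (vB + lat (eqvB m)))) *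
              (p₀ (x - (vB + lat (eqvB m))) : ℂ)) := tsum_congr h2
      _ = (starRingEnd ℂ) tau * ∑' m : ℤ × ℤ,
            Complex.exp (Complex.I * (dot KK (vB + lat (eqvB m)))) *
              (p₀ (x - (vB + lat (eqvB m))) : ℂ) := tsum_mul_left
      _ = (starRingEnd ℂ) tau * modePB p₀ x := by
          rw [Equiv.tsum_eq eqvB (fun m : ℤ × ℤ =>
            Complex.exp (Complex.I * (dot KK (vB + lat m))) *
              (p₀ (x - (vB + lat m)) : ℂ))]
          rfl
  · -- pseudo-periodicity of P_A
    intro x u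
    have h2 : ∀ m : ℤ × ℤ,
        Complex.exp (Complex.I * (dot KK (lat (m + u)))) *
            (p₀ (x + lat u - lat (m + u)) : ℂ)
          = Complex.exp (Complex.I * (dot KK (lat u))) *
              (Complex.exp (Complex.I * (dot KK (lat m))) * (p₀ (x - lat m) : ℂ)) := by
      intro m
      rw [lat_add']
      have harg : x + lat u - (lat m + lat u) = x - lat m := by abel
      have hph : (Complex.I * ((dot KK (lat m + lat u) : ℝ) : ℂ)) =
          Complex.I * ((dot KK (lat u) : ℝ) : ℂ) + Complex.I * ((dot KK (lat m) : ℝ) : ℂ) := by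
        rw [dotKK_add]; push_cast; ring
      rw [harg, hph, Complex.exp_add]
      ring
    calc modePA p₀ (x + lat u)
        = ∑' m : ℤ × ℤ, Complex.exp (Complex.I * (dot KK (lat ((Equiv.addRight u) m)))) *
            (p₀ (x + lat u - lat ((Equiv.addRight u) m)) : ℂ) :=
          (Equiv.tsum_eq (Equiv.addRight u) (fun m : ℤ × ℤ =>
            Complex.exp (Complex.I * (dot KK (lat m))) *
              (p₀ (x + lat u - lat m) : ℂ))).symm
      _ = ∑' m : ℤ × ℤ, Complex.exp (Complex.I * (dot KK (lat u))) *
            (Complex.exp (Complex.I * (dot KK (lat m))) * (p₀ (x - lat m) : ℂ)) :=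
          tsum_congr h2
      _ = Complex.exp (Complex.I * (dot KK (lat u))) * modePA p₀ x := tsum_mul_left
  · -- pseudo-periodicity of P_B
    intro x u
    have h2 : ∀ m : ℤ × ℤ,
        Complex.exp (Complex.I * (dot KK (vB + lat (m + u)))) *
            (p₀ (x + lat u - (vB + lat (m + u))) : ℂ)
          = Complex.exp (Complex.I * (dot KK (lat u))) *
              (Complex.exp (Complex.I * (dot KK (vB + lat m))) *
                (p₀ (x - (vB + lat m)) : ℂ)) := by
      intro m
      rw [lat_add']
      have harg : x + lat u - (vB + (lat m + lat u)) = x - (vB + lat m) := by abel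
      have hph : (Complex.I * ((dot KK (vB + (lat m + lat u)) : ℝ) : ℂ)) =
          Complex.I * ((dot KK (lat u) : ℝ) : ℂ) +
            Complex.I * ((dot KK (vB + lat m) : ℝ) : ℂ) := by
        have : vB + (lat m + lat u) = (vB + lat m) + lat u := by abel
        rw [this, dotKK_add]; push_cast; ring
      rw [harg, hph, Complex.exp_add]
      ring
    calc modePB p₀ (x + lat u)
        = ∑' m : ℤ × ℤ, Complex.exp (Complex.I * (dot KK (vB + lat ((Equiv.addRight u) m)))) *
            (p₀ (x + lat u - (vB + lat ((Equiv.addRight u) m))) : ℂ) :=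
          (Equiv.tsum_eq (Equiv.addRight u) (fun m : ℤ × ℤ =>
            Complex.exp (Complex.I * (dot KK (vB + lat m))) *
              (p₀ (x + lat u - (vB + lat m)) : ℂ))).symm
      _ = ∑' m : ℤ × ℤ, Complex.exp (Complex.I * (dot KK (lat u))) *
            (Complex.exp (Complex.I * (dot KK (vB + lat m))) *
              (p₀ (x - (vB + lat m)) : ℂ)) := tsum_congr h2
      _ = Complex.exp (Complex.I * (dot KK (lat u))) * modePB p₀ x := tsum_mul_left
end
end

section
/- There exists a constant c″ > 0 such that for all z, y ∈ ℝ² with |z| < 0.33/√3 and |y| < 0.33/√3, and for every m = (m₁, m₂) ∈ ℤ², there exists l₀ ∈ {0, 1, 2, 3, 4, 5} with |z − (m₁v₁ + m₂v₂) − y| − |z − R₆₀^{l₀} y| ≥ c″ |m|, where |m| denotes the Euclidean norm of m. -/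
noncomputable section

open scoped Real

lemma norm_sq_v2 (x : V2) : ‖x‖ ^ 2 = x 0 ^ 2 + x 1 ^ 2 := by
  rw [EuclideanSpace.norm_eq, Real.sq_sqrt (by positivity)]
  simp [Fin.sum_univ_two, sq_abs]

lemma lat_apply0 (m : ℤ × ℤ) : lat m 0 = (m.1 : ℝ) * (Real.sqrt 3 / 2) + (m.2 : ℝ) * (Real.sqrt 3 / 2) := by
  simp [lat, v1, v2, vec]

lemma lat_apply1 (m : ℤ × ℤ) : lat m 1 = (m.1 : ℝ) * (1/2) - (m.2 : ℝ) * (1/2) := by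
  simp [lat, v1, v2, vec]; ring

lemma lat_norm_sq (m : ℤ × ℤ) :
    ‖lat m‖ ^ 2 = (m.1 : ℝ) ^ 2 + (m.2 : ℝ) ^ 2 + (m.1 : ℝ) * (m.2 : ℝ) := by
  have h3 : Real.sqrt 3 ^ 2 = 3 := Real.sq_sqrt (by norm_num)
  rw [norm_sq_v2, lat_apply0, lat_apply1]
  nlinarith [h3]

lemma rot60_norm (x : V2) : ‖rot60 x‖ = ‖x‖ := by
  have h3 : Real.sqrt 3 ^ 2 = 3 := Real.sq_sqrt (by norm_num)
  have : ‖rot60 x‖ ^ 2 = ‖x‖ ^ 2 := by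
    rw [norm_sq_v2, norm_sq_v2]
    simp only [rot60, vec, PiLp.toLp_apply, Matrix.cons_val_zero, Matrix.cons_val_one, Matrix.head_cons]
    nlinarith [h3]
  have h1 : (0:ℝ) ≤ ‖rot60 x‖ := norm_nonneg _
  have h2 : (0:ℝ) ≤ ‖x‖ := norm_nonneg _
  nlinarith

/-- (Geometric Lemma, part 2.) There is `c″ > 0` so that for all
`z, y` with `|z|, |y| < 0.33/√3` and every `m ∈ ℤ²`, some `l₀ ∈ {0,…,5}` satisfies
`|z − (m₁v₁ + m₂v₂) − y| − |z − R₆₀^{l₀} y| ≥ c″ |m|`. -/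
theorem statement11 :
    ∃ c'' : ℝ, 0 < c'' ∧ ∀ z y : V2,
      ‖z‖ < 0.33 / Real.sqrt 3 → ‖y‖ < 0.33 / Real.sqrt 3 →
      ∀ m : ℤ × ℤ, ∃ l₀ : Fin 6,
        c'' * znorm m ≤ ‖z - lat m - y‖ - ‖z - rot60^[(l₀ : ℕ)] y‖ := by
  refine ⟨0.1, by norm_num, fun z y hz hy m => ⟨0, ?_⟩⟩
  simp only [Fin.val_zero, Function.iterate_zero, id_eq]
  have hs3 : (1.7:ℝ) ≤ Real.sqrt 3 := by
    rw [show (1.7:ℝ) = Real.sqrt (1.7^2) by rw [Real.sqrt_sq]; norm_num]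
    exact Real.sqrt_le_sqrt (by norm_num)
  have hs3pos : (0:ℝ) < Real.sqrt 3 := by linarith
  have hzy : ‖z‖ + ‖y‖ < 0.66 / Real.sqrt 3 := by
    calc ‖z‖ + ‖y‖ < 0.33 / Real.sqrt 3 + 0.33 / Real.sqrt 3 := add_lt_add hz hy
      _ = 0.66 / Real.sqrt 3 := by ring
  have hbound : ‖z‖ + ‖y‖ < 0.39 := by
    have : 0.66 / Real.sqrt 3 ≤ 0.39 := by
      rw [div_le_iff₀ hs3pos]; nlinarith
    linarith
  by_cases hm : m = (0, 0)
  · subst hm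
    have : lat (0,0) = 0 := by
      simp [lat]
    rw [this, znorm]
    simp
  · -- m ≠ 0
    have hLsq : ‖lat m‖ ^ 2 = (m.1 : ℝ) ^ 2 + (m.2 : ℝ) ^ 2 + (m.1 : ℝ) * (m.2 : ℝ) :=
      lat_norm_sq m
    have hint : (1 : ℤ) ≤ m.1 ^ 2 + m.2 ^ 2 + m.1 * m.2 := by
      rcases Prod.mk.injEq m.1 m.2 0 0 ▸ hm with h
      have h1 : m.1 ≠ 0 ∨ m.2 ≠ 0 := by
        by_contra hc
        push_neg at hc
        exact hm (Prod.ext hc.1 hc.2)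
      have : 0 < 2 * (m.1 ^ 2 + m.2 ^ 2 + m.1 * m.2) := by
        have := sq_nonneg (m.1 + m.2)
        rcases h1 with h | h
        · have ha := Int.one_le_abs h
          nlinarith [sq_abs m.1, sq_nonneg m.2]
        · have ha := Int.one_le_abs h
          nlinarith [sq_abs m.2, sq_nonneg m.1]
      omega
    have hL1 : (1:ℝ) ≤ ‖lat m‖ ^ 2 := by
      rw [hLsq]
      exact_mod_cast (by exact_mod_cast hint : (1:ℝ) ≤ ((m.1 ^ 2 + m.2 ^ 2 + m.1 * m.2 : ℤ) : ℝ))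
    have hLpos : (1:ℝ) ≤ ‖lat m‖ := by nlinarith [norm_nonneg (lat m)]
    have hzn : znorm m ^ 2 = (m.1:ℝ)^2 + (m.2:ℝ)^2 := by
      rw [znorm, Real.sq_sqrt (by positivity)]
    have hznle : znorm m ^ 2 ≤ 2 * ‖lat m‖ ^ 2 := by
      rw [hzn, hLsq]; nlinarith [sq_nonneg ((m.1:ℝ) + m.2)]
    have hzn_nonneg : 0 ≤ znorm m := Real.sqrt_nonneg _
    have key : znorm m ≤ 1.42 * ‖lat m‖ := by
      nlinarith [norm_nonneg (lat m)]
    have tri1 : ‖lat m‖ - ‖z‖ - ‖y‖ ≤ ‖z - lat m - y‖ := by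
      have := norm_sub_norm_le (lat m) (z - y)
      have h2 : ‖z - lat m - y‖ = ‖lat m - (z - y)‖ := by
        rw [show z - lat m - y = -(lat m - (z - y)) by abel, norm_neg]
      rw [h2]
      have := norm_sub_le z y
      calc ‖lat m‖ - ‖z‖ - ‖y‖ ≤ ‖lat m‖ - ‖z - y‖ := by linarith
        _ ≤ ‖lat m - (z - y)‖ := norm_sub_norm_le _ _
    have tri2 : ‖z - y‖ ≤ ‖z‖ + ‖y‖ := norm_sub_le z y
    have : 0.1 * znorm m ≤ ‖lat m‖ - 2 * (‖z‖ + ‖y‖) := by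
      nlinarith
    linarith
end
end

section
/- There exists a constant c‴ > 0 such that for all I ∈ {A, B}, all ν ∈ {1, 2, 3}, all z, y ∈ ℝ² with |z| < 0.33/√3 and |y| < 0.33/√3, and for every m = (m₁, m₂) ∈ ℤ² with m ∉ N_bad(e_{I,ν}), there exists l₀ ∈ {0, 1, 2, 3, 4, 5} with |z + (e_{I,ν} + m₁v₁ + m₂v₂) − y| − |z + e_{I,ν} − R₆₀^{l₀} y| ≥ c‴ |m|. -/
noncomputable section

open scoped Real

lemma normsq (x : V2) : ‖x‖^2 = (x 0)^2 + (x 1)^2 := by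
  rw [EuclideanSpace.norm_eq, Real.sq_sqrt (by positivity)]
  simp [Fin.sum_univ_two, sq_abs]

lemma lat0 (m : ℤ × ℤ) : lat m 0 = ((m.1:ℝ) + (m.2:ℝ)) * Real.sqrt 3 / 2 := by
  simp [lat, v1, v2, vec]; ring

lemma lat1 (m : ℤ × ℤ) : lat m 1 = ((m.1:ℝ) - (m.2:ℝ)) / 2 := by
  simp [lat, v1, v2, vec]; ring

lemma six_dir (a b t : ℝ) (hid : a^2 - a*b + b^2 = t^2) :
    t ≤ a ∨ t ≤ -a ∨ t ≤ b ∨ t ≤ -b ∨ t ≤ a - b ∨ t ≤ b - a := by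
  by_contra h
  push_neg at h
  obtain ⟨h1, h2, h3, h4, h5, h6⟩ := h
  have htpos : 0 < t := by linarith
  have hta : a^2 < t^2 := by nlinarith
  have htb : b^2 < t^2 := by nlinarith
  have htab : (a-b)^2 < t^2 := by nlinarith
  have hP : (t^2 - a^2)*(t^2 - b^2) = -(a*b)*(a-b)^2 := by
    linear_combination (a*b - t^2) * hid
  have hab : a*b < 0 := by nlinarith [mul_pos (by linarith : (0:ℝ) < t^2 - a^2) (by linarith : (0:ℝ) < t^2 - b^2)]
  nlinarith

lemma le_of_sq_le' (x y : ℝ) (hx : 0 ≤ x) (hy : 0 ≤ y) (h : x^2 ≤ y^2) : x ≤ y := by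
  have := Real.sqrt_le_sqrt h
  rwa [Real.sqrt_sq hx, Real.sqrt_sq hy] at this

lemma bigr (r Q K g : ℝ) (hr : 10 < r) (hK0 : 0 ≤ K) (hK : K < 1.0805)
    (hg0 : 0 ≤ g) (hg2 : g^2 ≤ 2*r^2) (hQg : r^2/2 - g ≤ Q) :
    (1/1000*r + K)^2 ≤ 1/3 + Q := by
  have hg15 : g ≤ 1.5*r := by nlinarith
  have hrr : 10*r ≤ r^2 := by nlinarith
  nlinarith [mul_nonneg hK0 (by linarith : (0:ℝ) ≤ r), sq_nonneg K, mul_le_mul_of_nonneg_right hK.le (by linarith : (0:ℝ) ≤ r)]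

lemma smallr (r Q K : ℝ) (hr0 : 0 ≤ r) (hr : r ≤ 10) (hK0 : 0 ≤ K) (hK : K < 1.0805)
    (hQ1 : 1 ≤ Q) : (1/1000*r + K)^2 ≤ 1/3 + Q := by
  nlinarith [mul_nonneg hr0 hK0, mul_nonneg hr0 hr0]

set_option maxHeartbeats 1000000 in
lemma key (s ζ β aa X D r Q g : ℝ)
    (hs3 : s^2 = 3) (hs1 : 1.732 < s)
    (hζ0 : 0 ≤ ζ) (hβ0 : 0 ≤ β) (haa0 : 0 ≤ aa)
    (hsζ : s*ζ < 0.33) (hsβ : s*β < 0.33)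
    (hsaaL : 1 - s*ζ ≤ s*aa) (hsaaH : s*aa ≤ 1 + s*ζ)
    (hX0 : 0 ≤ X) (hX2 : X^2 ≤ aa^2 + β^2 - s*aa*β)
    (hD0 : 0 ≤ D) (hD2 : D^2 = 1/3 + Q)
    (hQ1 : 1 ≤ Q) (hr0 : 0 ≤ r) (hg0 : 0 ≤ g) (hg2 : g^2 ≤ 2*r^2)
    (hQg : r^2/2 - g ≤ Q) :
    1/1000 * r + ζ + β + X ≤ D := by
  have hs0 : 0 < s := by linarith
  have hs2' : s < 2 := by nlinarith
  have hβub : β < 0.2 := by nlinarith [mul_le_mul_of_nonneg_right hs1.le hβ0]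
  have hζub : ζ < 0.2 := by nlinarith [mul_le_mul_of_nonneg_right hs1.le hζ0]
  have haaub : aa < 0.8 := by nlinarith [mul_le_mul_of_nonneg_right hs1.le haa0]
  have haalb : 0.38 < aa := by nlinarith
  have hA0 : 0 ≤ aa - s*β/2 := by nlinarith
  have hXA : X^2 ≤ (aa - s*β/2)^2 + (β/2)^2 := by nlinarith
  have hX1 : X ≤ aa + (1-s)*β/2 := by nlinarith [sq_nonneg (aa - s*β/2 + β/2 - X)]
  set K : ℝ := ζ + β + aa + (1-s)*β/2 with hK_def
  have h3s : 0 < 3 - s := by linarith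
  have hsK : s*K < 2.155 - 0.165*s := by
    have hprod : (3-s)*(s*β) ≤ (3-s)*0.33 := by nlinarith
    nlinarith
  have hK : K < 1.0805 := by
    by_contra hK'
    push_neg at hK'
    have h1 : s*1.0805 ≤ s*K := mul_le_mul_of_nonneg_left hK' hs0.le
    linarith
  have hK0 : 0 ≤ K := by
    have h2 := mul_nonneg (by linarith : (0:ℝ) ≤ 2 - s) hβ0
    rw [hK_def]; nlinarith [h2]
  have hT'0 : 0 ≤ 1/1000*r + K := by positivity
  have hT'D : 1/1000*r + K ≤ D := by
    apply le_of_sq_le' _ _ hT'0 hD0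
    rw [hD2]
    rcases le_or_gt r 10 with hr | hr
    · exact smallr r Q K hr0 hr hK0 hK hQ1
    · exact bigr r Q K g hr hK0 hK hg0 hg2 hQg
  linarith


lemma branch (e z y u : V2) (m : ℤ × ℤ) (cQ g c : ℝ)
    (hs1 : 1.732 < Real.sqrt 3) (hs3 : Real.sqrt 3^2 = 3)
    (hsζ : Real.sqrt 3 * ‖z‖ < 0.33) (hsβ : Real.sqrt 3 * ‖y‖ < 0.33)
    (hsaaL : 1 - Real.sqrt 3*‖z‖ ≤ Real.sqrt 3*‖z+e‖)
    (hsaaH : Real.sqrt 3*‖z+e‖ ≤ 1 + Real.sqrt 3*‖z‖)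
    (hc : Real.sqrt 3 * ‖z+e‖ * ‖y‖ / 2 ≤ c)
    (hXeq : ‖z + e - u‖^2 = ‖z+e‖^2 + ‖y‖^2 - 2*c)
    (htri : ‖e + lat m‖ - ‖z‖ - ‖y‖ ≤ ‖z + (e + lat m) - y‖)
    (hD2 : ‖e + lat m‖^2 = 1/3 + cQ) (hQ1 : 1 ≤ cQ)
    (hg0 : 0 ≤ g) (hg2 : g^2 ≤ 2*(znorm m)^2) (hQg : (znorm m)^2/2 - g ≤ cQ) :
    1/1000 * znorm m ≤ ‖z + (e + lat m) - y‖ - ‖z + e - u‖ := by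
  have hr0 : 0 ≤ znorm m := Real.sqrt_nonneg _
  have hXle : ‖z + e - u‖^2 ≤ ‖z+e‖^2 + ‖y‖^2 - Real.sqrt 3*‖z+e‖*‖y‖ := by
    rw [hXeq]; linarith
  have hkey := key (Real.sqrt 3) ‖z‖ ‖y‖ ‖z+e‖ ‖z+e-u‖ ‖e+lat m‖ (znorm m) cQ g hs3 hs1
    (norm_nonneg z) (norm_nonneg y) (norm_nonneg _) hsζ hsβ hsaaL hsaaH
    (norm_nonneg _) hXle (norm_nonneg _) hD2 hQ1 hr0 hg0 hg2 hQg
  linarith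

set_option maxHeartbeats 1000000 in
lemma main_core (e : V2) (L1 L2 : ℤ)
    (hnorm : (e 0)^2 + (e 1)^2 = 1/3)
    (hd1 : e 0 * Real.sqrt 3 + e 1 = (L1 : ℝ))
    (hd2 : e 0 * Real.sqrt 3 - e 1 = (L2 : ℝ))
    (hL1 : |L1| ≤ 1) (hL2 : |L2| ≤ 1)
    (z y : V2) (hz : ‖z‖ < 0.33 / Real.sqrt 3) (hy : ‖y‖ < 0.33 / Real.sqrt 3)
    (m : ℤ × ℤ) (hm : m ∉ Nbad e) :
    ∃ l₀ : Fin 6, 1/1000 * znorm m ≤ ‖z + (e + lat m) - y‖ - ‖z + e - rot60^[(l₀:ℕ)] y‖ := by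
  have hs3 : Real.sqrt 3 ^ 2 = 3 := Real.sq_sqrt (by norm_num)
  have hsnn : (0:ℝ) ≤ Real.sqrt 3 := Real.sqrt_nonneg 3
  have hs1 : (1.732:ℝ) < Real.sqrt 3 := by nlinarith
  have hs0 : (0:ℝ) < Real.sqrt 3 := by linarith
  -- the integer Q
  have hD2 : ‖e + lat m‖^2 = 1/3 + ((m.1^2 + m.1*m.2 + m.2^2 + L1*m.1 + L2*m.2 : ℤ):ℝ) := by
    rw [normsq]
    have h0 : (e + lat m) 0 = e 0 + lat m 0 := rfl
    have h1 : (e + lat m) 1 = e 1 + lat m 1 := rfl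
    rw [h0, h1, lat0, lat1]
    push_cast
    linear_combination hnorm + (m.1:ℝ) * hd1 + (m.2:ℝ) * hd2 + (((m.1:ℝ) + (m.2:ℝ))^2/4) * hs3
  obtain ⟨Q, hQdef⟩ : ∃ Q : ℤ, Q = m.1^2 + m.1*m.2 + m.2^2 + L1*m.1 + L2*m.2 := ⟨_, rfl⟩
  rw [← hQdef] at hD2
  have hQ0 : 0 ≤ Q := by
    by_contra h
    push_neg at h
    have h' : Q ≤ -1 := by omega
    have h'' : (Q:ℝ) ≤ -1 := by exact_mod_cast h'
    nlinarith [sq_nonneg ‖e + lat m‖]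
  have hQne : Q ≠ 0 := by
    intro h
    apply hm
    have h13 : ‖e + lat m‖^2 = 1/3 := by rw [hD2, h]; norm_num
    have h14 := congrArg Real.sqrt h13
    rw [Real.sqrt_sq (norm_nonneg _)] at h14
    have h15 : Real.sqrt (1/3) = 1 / Real.sqrt 3 := by
      rw [one_div, one_div, ← Real.sqrt_inv]
    show ‖e + lat m‖ = 1 / Real.sqrt 3
    rw [h14, h15]
  have hQ1 : (1:ℝ) ≤ (Q:ℝ) := by
    have : 1 ≤ Q := by omega
    exact_mod_cast this
  -- r and g
  have hr0 : 0 ≤ znorm m := Real.sqrt_nonneg _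
  have hr2 : (znorm m)^2 = (m.1:ℝ)^2 + (m.2:ℝ)^2 := Real.sq_sqrt (by positivity)
  have hg0 : (0:ℝ) ≤ |(m.1:ℝ)| + |(m.2:ℝ)| := by positivity
  have hg2 : (|(m.1:ℝ)| + |(m.2:ℝ)|)^2 ≤ 2*(znorm m)^2 := by
    rw [hr2]
    nlinarith [sq_nonneg (|(m.1:ℝ)| - |(m.2:ℝ)|), sq_abs (m.1:ℝ), sq_abs (m.2:ℝ)]
  have hQg : (znorm m)^2/2 - (|(m.1:ℝ)| + |(m.2:ℝ)|) ≤ (Q:ℝ) := by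
    have hL1' : |(L1:ℝ)| ≤ 1 := by exact_mod_cast hL1
    have hL2' : |(L2:ℝ)| ≤ 1 := by exact_mod_cast hL2
    have h1 : |(L1:ℝ) * m.1| ≤ |(m.1:ℝ)| := by
      rw [abs_mul]; exact mul_le_of_le_one_left (abs_nonneg _) hL1'
    have h2 : |(L2:ℝ) * m.2| ≤ |(m.2:ℝ)| := by
      rw [abs_mul]; exact mul_le_of_le_one_left (abs_nonneg _) hL2'
    have h3 := neg_abs_le ((L1:ℝ) * m.1)
    have h4 := neg_abs_le ((L2:ℝ) * m.2)
    have h5 : (Q:ℝ) = (m.1:ℝ)^2 + (m.1:ℝ)*(m.2:ℝ) + (m.2:ℝ)^2 + (L1:ℝ)*(m.1:ℝ) + (L2:ℝ)*(m.2:ℝ) := by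
      rw [hQdef]; push_cast; ring
    rw [hr2, h5]
    nlinarith [sq_nonneg ((m.1:ℝ) + (m.2:ℝ))]
  -- norms
  have hE2 : ‖e‖^2 = 1/3 := by rw [normsq]; exact hnorm
  have hsE : Real.sqrt 3 * ‖e‖ = 1 := by
    have h : (Real.sqrt 3*‖e‖ - 1) * (Real.sqrt 3*‖e‖ + 1) = 0 := by
      linear_combination (‖e‖^2) * hs3 + 3 * hE2
    rcases mul_eq_zero.mp h with h' | h'
    · linarith
    · nlinarith [norm_nonneg e]
  have hsζ : Real.sqrt 3 * ‖z‖ < 0.33 := by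
    have := (lt_div_iff₀ hs0).mp hz
    linarith
  have hsβ : Real.sqrt 3 * ‖y‖ < 0.33 := by
    have := (lt_div_iff₀ hs0).mp hy
    linarith
  have hsaaL : 1 - Real.sqrt 3*‖z‖ ≤ Real.sqrt 3*‖z + e‖ := by
    have htri : ‖e‖ ≤ ‖z + e‖ + ‖z‖ := by
      have h := norm_sub_le (z + e) z
      have h2 : (z + e) - z = e := by abel
      rw [h2] at h
      linarith
    nlinarith [mul_le_mul_of_nonneg_left htri hs0.le]
  have hsaaH : Real.sqrt 3*‖z + e‖ ≤ 1 + Real.sqrt 3*‖z‖ := by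
    have htri := norm_add_le z e
    nlinarith [mul_le_mul_of_nonneg_left htri hs0.le]
  have hW : ‖z + e‖^2 = ((z+e) 0)^2 + ((z+e) 1)^2 := normsq _
  have hY : ‖y‖^2 = (y 0)^2 + (y 1)^2 := normsq _
  have hid : ((z+e) 0 * y 0 + (z+e) 1 * y 1)^2
      - ((z+e) 0 * y 0 + (z+e) 1 * y 1)*((z+e) 0 * (y 0/2 + Real.sqrt 3 * y 1/2) + (z+e) 1 * (-(Real.sqrt 3 * y 0)/2 + y 1/2))
      + ((z+e) 0 * (y 0/2 + Real.sqrt 3 * y 1/2) + (z+e) 1 * (-(Real.sqrt 3 * y 0)/2 + y 1/2))^2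
      = (Real.sqrt 3 * ‖z + e‖ * ‖y‖ / 2)^2 := by
    linear_combination (((z+e) 0 * y 1 - (z+e) 1 * y 0)^2/4 - ‖z + e‖^2*‖y‖^2/4) * hs3
      - (3/4)*((y 0)^2+(y 1)^2) * hW - (3/4)*‖z + e‖^2 * hY
  -- rotation components
  have hu10 : (rot60 y) 0 = y 0/2 + Real.sqrt 3 * y 1/2 := by
    show (1/2) * y 0 + (Real.sqrt 3 / 2) * y 1 = _
    ring
  have hu11 : (rot60 y) 1 = -(Real.sqrt 3 * y 0)/2 + y 1/2 := by
    show -(Real.sqrt 3 / 2) * y 0 + (1/2) * y 1 = _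
    ring
  have hu20 : (rot60 (rot60 y)) 0 = -(y 0)/2 + Real.sqrt 3 * y 1/2 := by
    show (1/2) * (rot60 y) 0 + (Real.sqrt 3 / 2) * (rot60 y) 1 = _
    rw [hu10, hu11]
    linear_combination (-(y 0)/4) * hs3
  have hu21 : (rot60 (rot60 y)) 1 = -(Real.sqrt 3 * y 0)/2 - y 1/2 := by
    show -(Real.sqrt 3 / 2) * (rot60 y) 0 + (1/2) * (rot60 y) 1 = _
    rw [hu10, hu11]
    linear_combination (-(y 1)/4) * hs3
  have hu30 : (rot60 (rot60 (rot60 y))) 0 = -(y 0) := by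
    show (1/2) * (rot60 (rot60 y)) 0 + (Real.sqrt 3 / 2) * (rot60 (rot60 y)) 1 = _
    rw [hu20, hu21]
    linear_combination (-(y 0)/4) * hs3
  have hu31 : (rot60 (rot60 (rot60 y))) 1 = -(y 1) := by
    show -(Real.sqrt 3 / 2) * (rot60 (rot60 y)) 0 + (1/2) * (rot60 (rot60 y)) 1 = _
    rw [hu20, hu21]
    linear_combination (-(y 1)/4) * hs3
  have hu40 : (rot60 (rot60 (rot60 (rot60 y)))) 0 = -(y 0)/2 - Real.sqrt 3 * y 1/2 := by
    show (1/2) * (rot60 (rot60 (rot60 y))) 0 + (Real.sqrt 3 / 2) * (rot60 (rot60 (rot60 y))) 1 = _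
    rw [hu30, hu31]; ring
  have hu41 : (rot60 (rot60 (rot60 (rot60 y)))) 1 = Real.sqrt 3 * y 0/2 - y 1/2 := by
    show -(Real.sqrt 3 / 2) * (rot60 (rot60 (rot60 y))) 0 + (1/2) * (rot60 (rot60 (rot60 y))) 1 = _
    rw [hu30, hu31]; ring
  have hu50 : (rot60 (rot60 (rot60 (rot60 (rot60 y))))) 0 = y 0/2 - Real.sqrt 3 * y 1/2 := by
    show (1/2) * (rot60 (rot60 (rot60 (rot60 y)))) 0 + (Real.sqrt 3 / 2) * (rot60 (rot60 (rot60 (rot60 y)))) 1 = _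
    rw [hu40, hu41]
    linear_combination (y 0/4) * hs3
  have hu51 : (rot60 (rot60 (rot60 (rot60 (rot60 y))))) 1 = Real.sqrt 3 * y 0/2 + y 1/2 := by
    show -(Real.sqrt 3 / 2) * (rot60 (rot60 (rot60 (rot60 y)))) 0 + (1/2) * (rot60 (rot60 (rot60 (rot60 y)))) 1 = _
    rw [hu40, hu41]
    linear_combination (y 1/4) * hs3
  -- triangle inequality for the far point
  have htri : ‖e + lat m‖ - ‖z‖ - ‖y‖ ≤ ‖z + (e + lat m) - y‖ := by
    have h1 := norm_add_le (z + (e + lat m) - y) (y - z)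
    have h2 : (z + (e + lat m) - y) + (y - z) = e + lat m := by abel
    rw [h2] at h1
    have h3 := norm_sub_le y z
    linarith
  -- choose the direction
  rcases six_dir ((z+e) 0 * y 0 + (z+e) 1 * y 1)
      ((z+e) 0 * (y 0/2 + Real.sqrt 3 * y 1/2) + (z+e) 1 * (-(Real.sqrt 3 * y 0)/2 + y 1/2))
      (Real.sqrt 3 * ‖z + e‖ * ‖y‖ / 2) hid with hc | hc | hc | hc | hc | hc
  · refine ⟨0, branch e z y _ m _ _ _ hs1 hs3 hsζ hsβ hsaaL hsaaH hc ?_ htri hD2 hQ1 hg0 hg2 hQg⟩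
    show ‖z + e - y‖^2 = _
    rw [normsq]
    show ((z+e) 0 - y 0)^2 + ((z+e) 1 - y 1)^2 = _
    rw [hW, hY]; ring
  · refine ⟨3, branch e z y _ m _ _ _ hs1 hs3 hsζ hsβ hsaaL hsaaH hc ?_ htri hD2 hQ1 hg0 hg2 hQg⟩
    show ‖z + e - rot60 (rot60 (rot60 y))‖^2 = _
    rw [normsq]
    show ((z+e) 0 - (rot60 (rot60 (rot60 y))) 0)^2 + ((z+e) 1 - (rot60 (rot60 (rot60 y))) 1)^2 = _
    rw [hu30, hu31, hW, hY]; ring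
  · refine ⟨1, branch e z y _ m _ _ _ hs1 hs3 hsζ hsβ hsaaL hsaaH hc ?_ htri hD2 hQ1 hg0 hg2 hQg⟩
    show ‖z + e - rot60 y‖^2 = _
    rw [normsq]
    show ((z+e) 0 - (rot60 y) 0)^2 + ((z+e) 1 - (rot60 y) 1)^2 = _
    rw [hu10, hu11, hW, hY]
    linear_combination (((y 0)^2+(y 1)^2)/4) * hs3
  · refine ⟨4, branch e z y _ m _ _ _ hs1 hs3 hsζ hsβ hsaaL hsaaH hc ?_ htri hD2 hQ1 hg0 hg2 hQg⟩
    show ‖z + e - rot60 (rot60 (rot60 (rot60 y)))‖^2 = _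
    rw [normsq]
    show ((z+e) 0 - (rot60 (rot60 (rot60 (rot60 y)))) 0)^2 + ((z+e) 1 - (rot60 (rot60 (rot60 (rot60 y)))) 1)^2 = _
    rw [hu40, hu41, hW, hY]
    linear_combination (((y 0)^2+(y 1)^2)/4) * hs3
  · refine ⟨5, branch e z y _ m _ _ _ hs1 hs3 hsζ hsβ hsaaL hsaaH hc ?_ htri hD2 hQ1 hg0 hg2 hQg⟩
    show ‖z + e - rot60 (rot60 (rot60 (rot60 (rot60 y))))‖^2 = _
    rw [normsq]
    show ((z+e) 0 - (rot60 (rot60 (rot60 (rot60 (rot60 y))))) 0)^2 + ((z+e) 1 - (rot60 (rot60 (rot60 (rot60 (rot60 y))))) 1)^2 = _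
    rw [hu50, hu51, hW, hY]
    linear_combination (((y 0)^2+(y 1)^2)/4) * hs3
  · refine ⟨2, branch e z y _ m _ _ _ hs1 hs3 hsζ hsβ hsaaL hsaaH hc ?_ htri hD2 hQ1 hg0 hg2 hQg⟩
    show ‖z + e - rot60 (rot60 y)‖^2 = _
    rw [normsq]
    show ((z+e) 0 - (rot60 (rot60 y)) 0)^2 + ((z+e) 1 - (rot60 (rot60 y)) 1)^2 = _
    rw [hu20, hu21, hW, hY]
    linear_combination (((y 0)^2+(y 1)^2)/4) * hs3

/-- (Geometric Lemma, part 3.) There is `c‴ > 0` so that for all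
`I, ν`, all `z, y` with `|z|, |y| < 0.33/√3` and every `m ∈ ℤ² \ N_bad(e_{I,ν})`,
some `l₀ ∈ {0,…,5}` satisfies
`|z + (e_{I,ν} + m₁v₁ + m₂v₂) − y| − |z + e_{I,ν} − R₆₀^{l₀} y| ≥ c‴ |m|`. -/
theorem statement12 :
    ∃ c''' : ℝ, 0 < c''' ∧ ∀ (I : Bool) (ν : Fin 3) (z y : V2),
      ‖z‖ < 0.33 / Real.sqrt 3 → ‖y‖ < 0.33 / Real.sqrt 3 →
      ∀ m : ℤ × ℤ, m ∉ Nbad (eVec I ν) → ∃ l₀ : Fin 6,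
        c''' * znorm m ≤ ‖z + (eVec I ν + lat m) - y‖ - ‖z + eVec I ν - rot60^[(l₀ : ℕ)] y‖ := by
  have hs3 : Real.sqrt 3 ^ 2 = 3 := Real.sq_sqrt (by norm_num)
  have hs0 : (0:ℝ) < Real.sqrt 3 := Real.sqrt_pos.mpr (by norm_num)
  have h13 : (1:ℝ) / Real.sqrt 3 = Real.sqrt 3 / 3 := by
    rw [div_eq_div_iff hs0.ne' (by norm_num : (3:ℝ) ≠ 0)]
    linear_combination (-1) * hs3
  have e00 : eA 0 0 = Real.sqrt 3 / 3 := by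
    show 1 / Real.sqrt 3 = _; rw [h13]
  have e01 : eA 0 1 = 0 := rfl
  have e10 : eA 1 0 = -(Real.sqrt 3)/6 := by
    show -(1/2) * (1 / Real.sqrt 3) + Real.sqrt 3 / 2 * 0 = _
    rw [h13]; ring
  have e11 : eA 1 1 = -(1/2) := by
    show -(Real.sqrt 3 / 2) * (1 / Real.sqrt 3) - 1/2 * 0 = _
    rw [h13]; linear_combination (-1/6) * hs3
  have e20 : eA 2 0 = -(Real.sqrt 3)/6 := by
    show -(1/2) * (eA 1 0) + Real.sqrt 3 / 2 * (eA 1 1) = _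
    rw [e10, e11]; ring
  have e21 : eA 2 1 = 1/2 := by
    show -(Real.sqrt 3 / 2) * (eA 1 0) - 1/2 * (eA 1 1) = _
    rw [e10, e11]; linear_combination (1/12) * hs3
  refine ⟨1/1000, by norm_num, ?_⟩
  intro I ν z y hz hy m hm
  cases I
  · -- B : e = -eA ν
    fin_cases ν
    · refine main_core _ (-1) (-1) ?_ ?_ ?_ (by decide) (by decide) z y hz hy m hm
      · show (-(eA 0 0))^2 + (-(eA 0 1))^2 = 1/3
        rw [e00, e01]; linear_combination (1/9) * hs3
      · show -(eA 0 0) * Real.sqrt 3 + -(eA 0 1) = _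
        rw [e00, e01]; push_cast; linear_combination (-1/3) * hs3
      · show -(eA 0 0) * Real.sqrt 3 - -(eA 0 1) = _
        rw [e00, e01]; push_cast; linear_combination (-1/3) * hs3
    · refine main_core _ 1 0 ?_ ?_ ?_ (by decide) (by decide) z y hz hy m hm
      · show (-(eA 1 0))^2 + (-(eA 1 1))^2 = 1/3
        rw [e10, e11]; linear_combination (1/36) * hs3
      · show -(eA 1 0) * Real.sqrt 3 + -(eA 1 1) = _
        rw [e10, e11]; push_cast; linear_combination (1/6) * hs3
      · show -(eA 1 0) * Real.sqrt 3 - -(eA 1 1) = _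
        rw [e10, e11]; push_cast; linear_combination (1/6) * hs3
    · refine main_core _ 0 1 ?_ ?_ ?_ (by decide) (by decide) z y hz hy m hm
      · show (-(eA 2 0))^2 + (-(eA 2 1))^2 = 1/3
        rw [e20, e21]; linear_combination (1/36) * hs3
      · show -(eA 2 0) * Real.sqrt 3 + -(eA 2 1) = _
        rw [e20, e21]; push_cast; linear_combination (1/6) * hs3
      · show -(eA 2 0) * Real.sqrt 3 - -(eA 2 1) = _
        rw [e20, e21]; push_cast; linear_combination (1/6) * hs3
  · -- A
    fin_cases ν
    · refine main_core _ 1 1 ?_ ?_ ?_ (by decide) (by decide) z y hz hy m hm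
      · show (eA 0 0)^2 + (eA 0 1)^2 = 1/3
        rw [e00, e01]; linear_combination (1/9) * hs3
      · show (eA 0 0) * Real.sqrt 3 + (eA 0 1) = _
        rw [e00, e01]; push_cast; linear_combination (1/3) * hs3
      · show (eA 0 0) * Real.sqrt 3 - (eA 0 1) = _
        rw [e00, e01]; push_cast; linear_combination (1/3) * hs3
    · refine main_core _ (-1) 0 ?_ ?_ ?_ (by decide) (by decide) z y hz hy m hm
      · show (eA 1 0)^2 + (eA 1 1)^2 = 1/3
        rw [e10, e11]; linear_combination (1/36) * hs3
      · show (eA 1 0) * Real.sqrt 3 + (eA 1 1) = _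
        rw [e10, e11]; push_cast; linear_combination (-1/6) * hs3
      · show (eA 1 0) * Real.sqrt 3 - (eA 1 1) = _
        rw [e10, e11]; push_cast; linear_combination (-1/6) * hs3
    · refine main_core _ 0 (-1) ?_ ?_ ?_ (by decide) (by decide) z y hz hy m hm
      · show (eA 2 0)^2 + (eA 2 1)^2 = 1/3
        rw [e20, e21]; linear_combination (1/36) * hs3
      · show (eA 2 0) * Real.sqrt 3 + (eA 2 1) = _
        rw [e20, e21]; push_cast; linear_combination (-1/6) * hs3
      · show (eA 2 0) * Real.sqrt 3 - (eA 2 1) = _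
        rw [e20, e21]; push_cast; linear_combination (-1/6) * hs3
end
end
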